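/- Let v be a quadratic vector field on ℂ² with components P, Q of degree 2, having four isolated nondegenerate singular points p₁,…,p₄ (points where P=Q=0 and the linearization Dv has nonzero determinant). Then ∑_{k=1}^4 1/det Dv(p_k) = 0. -/

import Mathlib

open MvPolynomial


/-- Evaluation of a conic with coefficients `a..f` at `(x,y)`. -/
noncomputable def ev2 (a b c d e f x y : ℂ) : ℂ := a + b*x + c*y + d*x^2 + e*x*y + f*y^2

lemma quad3 {A B C t1 t2 t3 : ℂ} (h12 : t1 ≠ t2) (h13 : t1 ≠ t3) (h23 : t2 ≠ t3)
    (e1 : A + B*t1 + C*t1^2 = 0) (e2 : A + B*t2 + C*t2^2 = 0)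
    (e3 : A + B*t3 + C*t3^2 = 0) : A = 0 ∧ B = 0 ∧ C = 0 := by
  have d12 : t1 - t2 ≠ 0 := sub_ne_zero.2 h12
  have d13 : t1 - t3 ≠ 0 := sub_ne_zero.2 h13
  have d23 : t2 - t3 ≠ 0 := sub_ne_zero.2 h23
  have k12 : B + C*(t1+t2) = 0 := by
    have h : (t1 - t2) * (B + C*(t1+t2)) = 0 := by linear_combination e1 - e2
    exact (mul_eq_zero.1 h).resolve_left d12
  have k13 : B + C*(t1+t3) = 0 := by
    have h : (t1 - t3) * (B + C*(t1+t3)) = 0 := by linear_combination e1 - e3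
    exact (mul_eq_zero.1 h).resolve_left d13
  have hC : C = 0 := by
    have h : (t2 - t3) * C = 0 := by linear_combination k12 - k13
    exact (mul_eq_zero.1 h).resolve_left d23
  have hB : B = 0 := by linear_combination k12 - (t1+t2)*hC
  exact ⟨by linear_combination e1 - t1*hB - t1^2*hC, hB, hC⟩

lemma line3 {a b c d e f px py vx vy t1 t2 t3 : ℂ} (h12 : t1 ≠ t2) (h13 : t1 ≠ t3)
    (h23 : t2 ≠ t3)
    (e1 : ev2 a b c d e f (px+t1*vx) (py+t1*vy) = 0)
    (e2 : ev2 a b c d e f (px+t2*vx) (py+t2*vy) = 0)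
    (e3 : ev2 a b c d e f (px+t3*vx) (py+t3*vy) = 0) :
    ∀ t, ev2 a b c d e f (px+t*vx) (py+t*vy) = 0 := by
  set A := ev2 a b c d e f px py with hA
  set B := b*vx + c*vy + 2*d*px*vx + e*(px*vy + py*vx) + 2*f*py*vy with hB
  set C := d*vx^2 + e*vx*vy + f*vy^2 with hC
  have key : ∀ t, ev2 a b c d e f (px+t*vx) (py+t*vy) = A + B*t + C*t^2 := by
    intro t; rw [hA, hB, hC]; unfold ev2; ring
  obtain ⟨h1, h2, h3⟩ := quad3 h12 h13 h23 (by rw [← key]; exact e1)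
    (by rw [← key]; exact e2) (by rw [← key]; exact e3)
  intro t; rw [key, h1, h2, h3]; ring

lemma twolines {a b c d e f px py ux uy wx wy α β : ℂ}
    (hcr : ux*wy - uy*wx ≠ 0) (hα : α ≠ 0) (hβ : β ≠ 0)
    (hu : ∀ s, ev2 a b c d e f (px+s*ux) (py+s*uy) = 0)
    (hw : ∀ t, ev2 a b c d e f (px+t*wx) (py+t*wy) = 0)
    (h4 : ev2 a b c d e f (px+α*ux+β*wx) (py+α*uy+β*wy) = 0) :
    ∀ x y, ev2 a b c d e f x y = 0 := by
  set A := ev2 a b c d e f px py with hA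
  set Bu := b*ux + c*uy + 2*d*px*ux + e*(px*uy + py*ux) + 2*f*py*uy with hBu
  set Bw := b*wx + c*wy + 2*d*px*wx + e*(px*wy + py*wx) + 2*f*py*wy with hBw
  set Cu := d*ux^2 + e*ux*uy + f*uy^2 with hCu
  set Cw := d*wx^2 + e*wx*wy + f*wy^2 with hCw
  set E := 2*d*ux*wx + e*(ux*wy + uy*wx) + 2*f*uy*wy with hE
  have key : ∀ s t, ev2 a b c d e f (px+s*ux+t*wx) (py+s*uy+t*wy)
      = A + Bu*s + Bw*t + Cu*s^2 + E*s*t + Cw*t^2 := by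
    intro s t; rw [hA, hBu, hBw, hCu, hCw, hE]; unfold ev2; ring
  have hukey : ∀ s : ℂ, A + Bu*s + Cu*s^2 = 0 := by
    intro s
    have h := hu s
    rw [show px+s*ux = px+s*ux+(0:ℂ)*wx by ring, show py+s*uy = py+s*uy+(0:ℂ)*wy by ring,
      key] at h
    linear_combination h
  have hwkey : ∀ t : ℂ, A + Bw*t + Cw*t^2 = 0 := by
    intro t
    have h := hw t
    rw [show px+t*wx = px+(0:ℂ)*ux+t*wx by ring, show py+t*wy = py+(0:ℂ)*uy+t*wy by ring,
      key] at h
    linear_combination h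
  obtain ⟨hA0, hBu0, hCu0⟩ := quad3 (by norm_num : (0:ℂ) ≠ 1) (by norm_num : (0:ℂ) ≠ 2)
    (by norm_num : (1:ℂ) ≠ 2) (by simpa using hukey 0) (by simpa using hukey 1)
    (by simpa using hukey 2)
  obtain ⟨-, hBw0, hCw0⟩ := quad3 (by norm_num : (0:ℂ) ≠ 1) (by norm_num : (0:ℂ) ≠ 2)
    (by norm_num : (1:ℂ) ≠ 2) (by simpa using hwkey 0) (by simpa using hwkey 1)
    (by simpa using hwkey 2)
  have hE0 : E = 0 := by
    have h := h4
    rw [key] at h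
    rw [hA0, hBu0, hBw0, hCu0, hCw0] at h
    have : E * (α * β) = 0 := by linear_combination h
    exact (mul_eq_zero.1 this).resolve_right (mul_ne_zero hα hβ)
  intro x y
  set s := ((x-px)*wy - (y-py)*wx)/(ux*wy - uy*wx) with hs
  set t := (ux*(y-py) - uy*(x-px))/(ux*wy - uy*wx) with ht
  have hx : px + s*ux + t*wx = x := by rw [hs, ht, div_mul_eq_mul_div, div_mul_eq_mul_div, add_assoc, ← add_div, add_div' _ _ _ hcr, div_eq_iff hcr]; ring
  have hy : py + s*uy + t*wy = y := by rw [hs, ht, div_mul_eq_mul_div, div_mul_eq_mul_div, add_assoc, ← add_div, add_div' _ _ _ hcr, div_eq_iff hcr]; ring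
  rw [← hx, ← hy, key, hA0, hBu0, hBw0, hCu0, hCw0, hE0]; ring


lemma ev2_inj {a b c d e f a' b' c' d' e' f' : ℂ}
    (h : ∀ x y : ℂ, ev2 a b c d e f x y = ev2 a' b' c' d' e' f' x y) :
    a = a' ∧ b = b' ∧ c = c' ∧ d = d' ∧ e = e' ∧ f = f' := by
  have h00 := h 0 0
  have h10 := h 1 0
  have hm0 := h (-1) 0
  have h01 := h 0 1
  have h0m := h 0 (-1)
  have h11 := h 1 1
  unfold ev2 at h00 h10 hm0 h01 h0m h11
  refine ⟨by linear_combination h00, by linear_combination (h10 - hm0)/2,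
    by linear_combination (h01 - h0m)/2, by linear_combination (h10 + hm0 - 2*h00)/2,
    by linear_combination h11 - h10 - h01 + h00,
    by linear_combination (h01 + h0m - 2*h00)/2⟩

lemma noncollinear {aP bP cP dP eP fP aQ bQ cQ dQ eQ fQ : ℂ}
    {p : Fin 4 → Fin 2 → ℂ} (hinj : Function.Injective p)
    (hz : ∀ x : Fin 2 → ℂ,
      (ev2 aP bP cP dP eP fP (x 0) (x 1) = 0 ∧ ev2 aQ bQ cQ dQ eQ fQ (x 0) (x 1) = 0)
        ↔ ∃ m, x = p m)
    {i j k : Fin 4} (hij : i ≠ j) (hik : i ≠ k) (hjk : j ≠ k) :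
    (p j 0 - p i 0)*(p k 1 - p i 1) - (p j 1 - p i 1)*(p k 0 - p i 0) ≠ 0 := by
  intro hcol
  obtain ⟨ux, hux⟩ : ∃ ux, p j 0 - p i 0 = ux := ⟨_, rfl⟩
  obtain ⟨uy, huy⟩ : ∃ uy, p j 1 - p i 1 = uy := ⟨_, rfl⟩
  rw [hux, huy] at hcol
  have hfe : ∀ {m m' : Fin 4}, p m 0 = p m' 0 → p m 1 = p m' 1 → m = m' := by
    intro m m' h0 h1
    apply hinj; funext idx; fin_cases idx <;> assumption
  have hvne : ¬(ux = 0 ∧ uy = 0) := by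
    rintro ⟨h0, h1⟩
    exact hij (hfe (sub_eq_zero.1 (hux.trans h0)) (sub_eq_zero.1 (huy.trans h1))).symm
  -- find t3 with p k = p i + t3 • u
  obtain ⟨t3, hk0, hk1⟩ : ∃ t3, p k 0 = p i 0 + t3*ux ∧ p k 1 = p i 1 + t3*uy := by
    by_cases h0 : ux = 0
    · have h1 : uy ≠ 0 := fun h => hvne ⟨h0, h⟩
      refine ⟨(p k 1 - p i 1)/uy, ?_, by rw [div_mul_cancel₀ _ h1]; ring⟩
      have h2 : uy * (p k 0 - p i 0) = 0 := by
        linear_combination -hcol + (p k 1 - p i 1) * h0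
      have h3 := (mul_eq_zero.1 h2).resolve_left h1
      rw [h0]; linear_combination h3
    · refine ⟨(p k 0 - p i 0)/ux, by rw [div_mul_cancel₀ _ h0]; ring, ?_⟩
      have : ux * (p k 1 - (p i 1 + (p k 0 - p i 0)/ux * uy)) = 0 := by
        field_simp
        linear_combination hcol
      have := (mul_eq_zero.1 this).resolve_left h0
      linear_combination this
  have ht30 : t3 ≠ 0 := by
    rintro rfl
    exact hik (hfe (by rw [hk0]; ring) (by rw [hk1]; ring)).symm
  have ht31 : t3 ≠ 1 := by
    rintro rfl
    exact hjk ((hfe (by rw [hk0, ← hux]; ring) (by rw [hk1, ← huy]; ring)).symm)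
  -- the three points p i, p j, p k are on the line, so P and Q vanish on it
  have hzi := (hz (p i)).2 ⟨i, rfl⟩
  have hzj := (hz (p j)).2 ⟨j, rfl⟩
  have hzk := (hz (p k)).2 ⟨k, rfl⟩
  have e0 : ∀ (A B C D E F : ℂ), ev2 A B C D E F (p i 0) (p i 1) = 0 →
      ev2 A B C D E F (p i 0 + 0*ux) (p i 1 + 0*uy) = 0 := by
    intro A B C D E F h; rw [show p i 0 + 0*ux = p i 0 by ring, show p i 1 + 0*uy = p i 1 by ring]; exact h
  have e1 : ∀ (A B C D E F : ℂ), ev2 A B C D E F (p j 0) (p j 1) = 0 →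
      ev2 A B C D E F (p i 0 + 1*ux) (p i 1 + 1*uy) = 0 := by
    intro A B C D E F h
    rw [show p i 0 + 1*ux = p j 0 by rw [← hux]; ring, show p i 1 + 1*uy = p j 1 by rw [← huy]; ring]
    exact h
  have e3 : ∀ (A B C D E F : ℂ), ev2 A B C D E F (p k 0) (p k 1) = 0 →
      ev2 A B C D E F (p i 0 + t3*ux) (p i 1 + t3*uy) = 0 := by
    intro A B C D E F h; rw [← hk0, ← hk1]; exact h
  have hlP := line3 (zero_ne_one) (Ne.symm ht30) (Ne.symm ht31)
    (e0 _ _ _ _ _ _ hzi.1) (e1 _ _ _ _ _ _ hzj.1) (e3 _ _ _ _ _ _ hzk.1)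
  have hlQ := line3 (zero_ne_one) (Ne.symm ht30) (Ne.symm ht31)
    (e0 _ _ _ _ _ _ hzi.2) (e1 _ _ _ _ _ _ hzj.2) (e3 _ _ _ _ _ _ hzk.2)
  -- every point of the line is one of the four points: pigeonhole
  have hmap : ∀ t : ℂ, ∃ m, (fun idx => p i idx + t * (p j idx - p i idx)) = p m := by
    intro t
    apply (hz _).1
    constructor
    · have := hlP t
      simpa [← hux, ← huy] using this
    · have := hlQ t
      simpa [← hux, ← huy] using this
  choose F hF using hmap
  obtain ⟨t, t', htt, hFt⟩ := Finite.exists_ne_map_eq_of_infinite F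
  have : ∀ idx, p i idx + t * (p j idx - p i idx) = p i idx + t' * (p j idx - p i idx) := by
    intro idx
    rw [show p i idx + t * (p j idx - p i idx) = (fun idx => p i idx + t * (p j idx - p i idx)) idx from rfl, hF t, hFt, ← hF t']
  have hz0 : (t - t') * ux = 0 := by
    have h := this 0; rw [← hux]; linear_combination h
  have hz1 : (t - t') * uy = 0 := by
    have h := this 1; rw [← huy]; linear_combination h
  have htne : t - t' ≠ 0 := sub_ne_zero.2 htt
  exact hvne ⟨(mul_eq_zero.1 hz0).resolve_left htne, (mul_eq_zero.1 hz1).resolve_left htne⟩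

set_option maxHeartbeats 1600000 in
lemma rep {x1 y1 x2 y2 x3 y3 x4 y4 : ℂ}
    (h123 : ((x2-x1)*(y3-y1) - (y2-y1)*(x3-x1)) ≠ 0)
    (h124 : ((x2-x1)*(y4-y1) - (y2-y1)*(x4-x1)) ≠ 0)
    (h134 : ((x3-x1)*(y4-y1) - (y3-y1)*(x4-x1)) ≠ 0)
    {a b c d e f : ℂ}
    (hz1 : ev2 a b c d e f x1 y1 = 0) (hz2 : ev2 a b c d e f x2 y2 = 0)
    (hz3 : ev2 a b c d e f x3 y3 = 0) (hz4 : ev2 a b c d e f x4 y4 = 0) :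
    ∃ u v : ℂ, ∀ x y, ev2 a b c d e f x y =
      u * (((x2-x1)*(y-y1) - (y2-y1)*(x-x1)) * ((x4-x3)*(y-y3) - (y4-y3)*(x-x3))) + v * (((x3-x1)*(y-y1) - (y3-y1)*(x-x1)) * ((x4-x2)*(y-y2) - (y4-y2)*(x-x2))) := by
  obtain ⟨u, hu_def⟩ : ∃ u : ℂ, u = ev2 a b c d e f (2*x3-x1) (2*y3-y1) / (-2 * ((x2-x1)*(y3-y1) - (y2-y1)*(x3-x1)) * ((x3-x1)*(y4-y1) - (y3-y1)*(x4-x1))) := ⟨_, rfl⟩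
  obtain ⟨v, hv_def⟩ : ∃ v : ℂ, v = ev2 a b c d e f (2*x2-x1) (2*y2-y1) / (2 * ((x2-x1)*(y3-y1) - (y2-y1)*(x3-x1)) * ((x2-x1)*(y4-y1) - (y2-y1)*(x4-x1))) := ⟨_, rfl⟩
  have hTq1ne : (2 * ((x2-x1)*(y3-y1) - (y2-y1)*(x3-x1)) * ((x2-x1)*(y4-y1) - (y2-y1)*(x4-x1))) ≠ 0 := mul_ne_zero (mul_ne_zero two_ne_zero h123) h124
  have hSq2ne : (-2 * ((x2-x1)*(y3-y1) - (y2-y1)*(x3-x1)) * ((x3-x1)*(y4-y1) - (y3-y1)*(x4-x1))) ≠ 0 := mul_ne_zero (mul_ne_zero (by norm_num) h123) h134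
  have hvT : v * (2 * ((x2-x1)*(y3-y1) - (y2-y1)*(x3-x1)) * ((x2-x1)*(y4-y1) - (y2-y1)*(x4-x1))) = ev2 a b c d e f (2*x2-x1) (2*y2-y1) := by
    rw [hv_def, div_mul_cancel₀ _ hTq1ne]
  have huS : u * (-2 * ((x2-x1)*(y3-y1) - (y2-y1)*(x3-x1)) * ((x3-x1)*(y4-y1) - (y3-y1)*(x4-x1))) = ev2 a b c d e f (2*x3-x1) (2*y3-y1) := by
    rw [hu_def, div_mul_cancel₀ _ hSq2ne]
  have hR1 : ev2 (a - u*((-(x2-x1)*y1 + (y2-y1)*x1)*(-(x4-x3)*y3 + (y4-y3)*x3)) - v*((-(x3-x1)*y1 + (y3-y1)*x1)*(-(x4-x2)*y2 + (y4-y2)*x2))) (b - u*((-(x2-x1)*y1 + (y2-y1)*x1)*(-(y4-y3))+(-(x4-x3)*y3 + (y4-y3)*x3)*(-(y2-y1))) - v*((-(x3-x1)*y1 + (y3-y1)*x1)*(-(y4-y2))+(-(x4-x2)*y2 + (y4-y2)*x2)*(-(y3-y1)))) (c - u*((-(x2-x1)*y1 + (y2-y1)*x1)*(x4-x3)+(-(x4-x3)*y3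 + (y4-y3)*x3)*(x2-x1)) - v*((-(x3-x1)*y1 + (y3-y1)*x1)*(x4-x2)+(-(x4-x2)*y2 + (y4-y2)*x2)*(x3-x1))) (d - u*((-(y2-y1))*(-(y4-y3))) - v*((-(y3-y1))*(-(y4-y2)))) (e - u*((-(y2-y1))*(x4-x3)+(-(y4-y3))*(x2-x1)) - v*((-(y3-y1))*(x4-x2)+(-(y4-y2))*(x3-x1))) (f - u*((x2-x1)*(x4-x3)) - v*((x3-x1)*(x4-x2))) x1 y1 = 0 := by
    unfold ev2 at hz1 ⊢; linear_combination hz1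
  have hR2 : ev2 (a - u*((-(x2-x1)*y1 + (y2-y1)*x1)*(-(x4-x3)*y3 + (y4-y3)*x3)) - v*((-(x3-x1)*y1 + (y3-y1)*x1)*(-(x4-x2)*y2 + (y4-y2)*x2))) (b - u*((-(x2-x1)*y1 + (y2-y1)*x1)*(-(y4-y3))+(-(x4-x3)*y3 + (y4-y3)*x3)*(-(y2-y1))) - v*((-(x3-x1)*y1 + (y3-y1)*x1)*(-(y4-y2))+(-(x4-x2)*y2 + (y4-y2)*x2)*(-(y3-y1)))) (c - u*((-(x2-x1)*y1 + (y2-y1)*x1)*(x4-x3)+(-(x4-x3)*y3 + (y4-y3)*x3)*(x2-x1)) - v*((-(x3-x1)*y1 + (y3-y1)*x1)*(x4-x2)+(-(x4-x2)*y2 + (y4-y2)*x2)*(x3-x1))) (d - u*((-(y2-y1))*(-(y4-y3))) - v*((-(y3-y1))*(-(y4-y2)))) (e - u*((-(y2-y1))*(x4-x3)+(-(y4-y3))*(x2-x1)) - v*((-(y3-y1))*(x4-x2)+(-(y4-y2))*(x3-x1))) (f - u*((x2-x1)*(x4-x3)) - v*((x3-x1)*(x4-x2))) x2 y2 = 0 :=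 by
    unfold ev2 at hz2 ⊢; linear_combination hz2
  have hR3 : ev2 (a - u*((-(x2-x1)*y1 + (y2-y1)*x1)*(-(x4-x3)*y3 + (y4-y3)*x3)) - v*((-(x3-x1)*y1 + (y3-y1)*x1)*(-(x4-x2)*y2 + (y4-y2)*x2))) (b - u*((-(x2-x1)*y1 + (y2-y1)*x1)*(-(y4-y3))+(-(x4-x3)*y3 + (y4-y3)*x3)*(-(y2-y1))) - v*((-(x3-x1)*y1 + (y3-y1)*x1)*(-(y4-y2))+(-(x4-x2)*y2 + (y4-y2)*x2)*(-(y3-y1)))) (c - u*((-(x2-x1)*y1 + (y2-y1)*x1)*(x4-x3)+(-(x4-x3)*y3 + (y4-y3)*x3)*(x2-x1)) - v*((-(x3-x1)*y1 + (y3-y1)*x1)*(x4-x2)+(-(x4-x2)*y2 + (y4-y2)*x2)*(x3-x1))) (d - u*((-(y2-y1))*(-(y4-y3))) - v*((-(y3-y1))*(-(y4-y2)))) (e - u*((-(y2-y1))*(x4-x3)+(-(y4-y3))*(x2-x1)) - v*((-(y3-y1))*(x4-x2)+(-(y4-y2))*(x3-x1))) (f - u*((x2-x1)*(x4-x3)) -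 v*((x3-x1)*(x4-x2))) x3 y3 = 0 := by
    unfold ev2 at hz3 ⊢; linear_combination hz3
  have hR4 : ev2 (a - u*((-(x2-x1)*y1 + (y2-y1)*x1)*(-(x4-x3)*y3 + (y4-y3)*x3)) - v*((-(x3-x1)*y1 + (y3-y1)*x1)*(-(x4-x2)*y2 + (y4-y2)*x2))) (b - u*((-(x2-x1)*y1 + (y2-y1)*x1)*(-(y4-y3))+(-(x4-x3)*y3 + (y4-y3)*x3)*(-(y2-y1))) - v*((-(x3-x1)*y1 + (y3-y1)*x1)*(-(y4-y2))+(-(x4-x2)*y2 + (y4-y2)*x2)*(-(y3-y1)))) (c - u*((-(x2-x1)*y1 + (y2-y1)*x1)*(x4-x3)+(-(x4-x3)*y3 + (y4-y3)*x3)*(x2-x1)) - v*((-(x3-x1)*y1 + (y3-y1)*x1)*(x4-x2)+(-(x4-x2)*y2 + (y4-y2)*x2)*(x3-x1))) (d - u*((-(y2-y1))*(-(y4-y3))) - v*((-(y3-y1))*(-(y4-y2)))) (e - u*((-(y2-y1))*(x4-x3)+(-(y4-y3))*(x2-x1)) - v*((-(y3-y1))*(x4-x2)+(-(y4-y2))*(x3-x1)))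 (f - u*((x2-x1)*(x4-x3)) - v*((x3-x1)*(x4-x2))) x4 y4 = 0 := by
    unfold ev2 at hz4 ⊢; linear_combination hz4
  have hRq1 : ev2 (a - u*((-(x2-x1)*y1 + (y2-y1)*x1)*(-(x4-x3)*y3 + (y4-y3)*x3)) - v*((-(x3-x1)*y1 + (y3-y1)*x1)*(-(x4-x2)*y2 + (y4-y2)*x2))) (b - u*((-(x2-x1)*y1 + (y2-y1)*x1)*(-(y4-y3))+(-(x4-x3)*y3 + (y4-y3)*x3)*(-(y2-y1))) - v*((-(x3-x1)*y1 + (y3-y1)*x1)*(-(y4-y2))+(-(x4-x2)*y2 + (y4-y2)*x2)*(-(y3-y1)))) (c - u*((-(x2-x1)*y1 + (y2-y1)*x1)*(x4-x3)+(-(x4-x3)*y3 + (y4-y3)*x3)*(x2-x1)) - v*((-(x3-x1)*y1 + (y3-y1)*x1)*(x4-x2)+(-(x4-x2)*y2 + (y4-y2)*x2)*(x3-x1))) (d - u*((-(y2-y1))*(-(y4-y3))) - v*((-(y3-y1))*(-(y4-y2)))) (e - u*((-(y2-y1))*(x4-x3)+(-(y4-y3))*(x2-x1)) - v*((-(y3-y1))*(x4-x2)+(-(y4-y2))*(x3-x1)))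 (f - u*((x2-x1)*(x4-x3)) - v*((x3-x1)*(x4-x2))) (2*x2-x1) (2*y2-y1) = 0 := by
    unfold ev2 at hvT ⊢; linear_combination -hvT
  have hRq2 : ev2 (a - u*((-(x2-x1)*y1 + (y2-y1)*x1)*(-(x4-x3)*y3 + (y4-y3)*x3)) - v*((-(x3-x1)*y1 + (y3-y1)*x1)*(-(x4-x2)*y2 + (y4-y2)*x2))) (b - u*((-(x2-x1)*y1 + (y2-y1)*x1)*(-(y4-y3))+(-(x4-x3)*y3 + (y4-y3)*x3)*(-(y2-y1))) - v*((-(x3-x1)*y1 + (y3-y1)*x1)*(-(y4-y2))+(-(x4-x2)*y2 + (y4-y2)*x2)*(-(y3-y1)))) (c - u*((-(x2-x1)*y1 + (y2-y1)*x1)*(x4-x3)+(-(x4-x3)*y3 + (y4-y3)*x3)*(x2-x1)) - v*((-(x3-x1)*y1 + (y3-y1)*x1)*(x4-x2)+(-(x4-x2)*y2 + (y4-y2)*x2)*(x3-x1))) (d - u*((-(y2-y1))*(-(y4-y3))) - v*((-(y3-y1))*(-(y4-y2)))) (e - u*((-(y2-y1))*(x4-x3)+(-(y4-y3))*(x2-x1))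 - v*((-(y3-y1))*(x4-x2)+(-(y4-y2))*(x3-x1))) (f - u*((x2-x1)*(x4-x3)) - v*((x3-x1)*(x4-x2))) (2*x3-x1) (2*y3-y1) = 0 := by
    unfold ev2 at huS ⊢; linear_combination -huS
  have hlineu : ∀ s : ℂ, ev2 (a - u*((-(x2-x1)*y1 + (y2-y1)*x1)*(-(x4-x3)*y3 + (y4-y3)*x3)) - v*((-(x3-x1)*y1 + (y3-y1)*x1)*(-(x4-x2)*y2 + (y4-y2)*x2))) (b - u*((-(x2-x1)*y1 + (y2-y1)*x1)*(-(y4-y3))+(-(x4-x3)*y3 + (y4-y3)*x3)*(-(y2-y1))) - v*((-(x3-x1)*y1 + (y3-y1)*x1)*(-(y4-y2))+(-(x4-x2)*y2 + (y4-y2)*x2)*(-(y3-y1)))) (c - u*((-(x2-x1)*y1 + (y2-y1)*x1)*(x4-x3)+(-(x4-x3)*y3 + (y4-y3)*x3)*(x2-x1)) - v*((-(x3-x1)*y1 + (y3-y1)*x1)*(x4-x2)+(-(x4-x2)*y2 + (y4-y2)*x2)*(x3-x1))) (d - u*((-(y2-y1))*(-(y4-y3))) - v*((-(y3-y1))*(-(y4-y2))))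 (e - u*((-(y2-y1))*(x4-x3)+(-(y4-y3))*(x2-x1)) - v*((-(y3-y1))*(x4-x2)+(-(y4-y2))*(x3-x1))) (f - u*((x2-x1)*(x4-x3)) - v*((x3-x1)*(x4-x2))) (x1+s*(x2-x1)) (y1+s*(y2-y1)) = 0 := by
    apply line3 (t1 := 0) (t2 := 1) (t3 := 2) (by norm_num) (by norm_num) (by norm_num)
    · rw [show x1+(0:ℂ)*(x2-x1) = x1 by ring, show y1+(0:ℂ)*(y2-y1) = y1 by ring]; exact hR1
    · rw [show x1+(1:ℂ)*(x2-x1) = x2 by ring, show y1+(1:ℂ)*(y2-y1) = y2 by ring]; exact hR2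
    · rw [show x1+(2:ℂ)*(x2-x1) = (2*x2-x1) by ring, show y1+(2:ℂ)*(y2-y1) = (2*y2-y1) by ring]
      exact hRq1
  have hlinew : ∀ t : ℂ, ev2 (a - u*((-(x2-x1)*y1 + (y2-y1)*x1)*(-(x4-x3)*y3 + (y4-y3)*x3)) - v*((-(x3-x1)*y1 + (y3-y1)*x1)*(-(x4-x2)*y2 + (y4-y2)*x2))) (b - u*((-(x2-x1)*y1 + (y2-y1)*x1)*(-(y4-y3))+(-(x4-x3)*y3 + (y4-y3)*x3)*(-(y2-y1))) - v*((-(x3-x1)*y1 + (y3-y1)*x1)*(-(y4-y2))+(-(x4-x2)*y2 + (y4-y2)*x2)*(-(y3-y1)))) (c - u*((-(x2-x1)*y1 + (y2-y1)*x1)*(x4-x3)+(-(x4-x3)*y3 + (y4-y3)*x3)*(x2-x1)) - v*((-(x3-x1)*y1 + (y3-y1)*x1)*(x4-x2)+(-(x4-x2)*y2 + (y4-y2)*x2)*(x3-x1))) (d - u*((-(y2-y1))*(-(y4-y3))) - v*((-(y3-y1))*(-(y4-y2)))) (e - u*((-(y2-y1))*(x4-x3)+(-(y4-y3))*(x2-x1))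 - v*((-(y3-y1))*(x4-x2)+(-(y4-y2))*(x3-x1))) (f - u*((x2-x1)*(x4-x3)) - v*((x3-x1)*(x4-x2))) (x1+t*(x3-x1)) (y1+t*(y3-y1)) = 0 := by
    apply line3 (t1 := 0) (t2 := 1) (t3 := 2) (by norm_num) (by norm_num) (by norm_num)
    · rw [show x1+(0:ℂ)*(x3-x1) = x1 by ring, show y1+(0:ℂ)*(y3-y1) = y1 by ring]; exact hR1
    · rw [show x1+(1:ℂ)*(x3-x1) = x3 by ring, show y1+(1:ℂ)*(y3-y1) = y3 by ring]; exact hR3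
    · rw [show x1+(2:ℂ)*(x3-x1) = (2*x3-x1) by ring, show y1+(2:ℂ)*(y3-y1) = (2*y3-y1) by ring]
      exact hRq2
  have hzero : ∀ x y : ℂ, ev2 (a - u*((-(x2-x1)*y1 + (y2-y1)*x1)*(-(x4-x3)*y3 + (y4-y3)*x3)) - v*((-(x3-x1)*y1 + (y3-y1)*x1)*(-(x4-x2)*y2 + (y4-y2)*x2))) (b - u*((-(x2-x1)*y1 + (y2-y1)*x1)*(-(y4-y3))+(-(x4-x3)*y3 + (y4-y3)*x3)*(-(y2-y1))) - v*((-(x3-x1)*y1 + (y3-y1)*x1)*(-(y4-y2))+(-(x4-x2)*y2 + (y4-y2)*x2)*(-(y3-y1)))) (c - u*((-(x2-x1)*y1 + (y2-y1)*x1)*(x4-x3)+(-(x4-x3)*y3 + (y4-y3)*x3)*(x2-x1)) - v*((-(x3-x1)*y1 + (y3-y1)*x1)*(x4-x2)+(-(x4-x2)*y2 + (y4-y2)*x2)*(x3-x1))) (d - u*((-(y2-y1))*(-(y4-y3))) - v*((-(y3-y1))*(-(y4-y2)))) (e - u*((-(y2-y1))*(x4-x3)+(-(y4-y3))*(x2-x1))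 - v*((-(y3-y1))*(x4-x2)+(-(y4-y2))*(x3-x1))) (f - u*((x2-x1)*(x4-x3)) - v*((x3-x1)*(x4-x2))) x y = 0 := by
    apply twolines (α := ((-((x3-x1)*(y4-y1) - (y3-y1)*(x4-x1)))/((x2-x1)*(y3-y1) - (y2-y1)*(x3-x1)))) (β := (((x2-x1)*(y4-y1) - (y2-y1)*(x4-x1))/((x2-x1)*(y3-y1) - (y2-y1)*(x3-x1)))) h123
      (div_ne_zero (neg_ne_zero.2 h134) h123) (div_ne_zero h124 h123) hlineu hlinew
    rw [show x1+((-((x3-x1)*(y4-y1) - (y3-y1)*(x4-x1)))/((x2-x1)*(y3-y1) - (y2-y1)*(x3-x1)))*(x2-x1)+(((x2-x1)*(y4-y1) - (y2-y1)*(x4-x1))/((x2-x1)*(y3-y1) - (y2-y1)*(x3-x1)))*(x3-x1) = x4 by rw [div_mul_eq_mul_div, div_mul_eq_mul_div, add_assoc, ← add_div, add_div' _ _ _ h123, div_eq_iff h123]; ring,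
      show y1+((-((x3-x1)*(y4-y1) - (y3-y1)*(x4-x1)))/((x2-x1)*(y3-y1) - (y2-y1)*(x3-x1)))*(y2-y1)+(((x2-x1)*(y4-y1) - (y2-y1)*(x4-x1))/((x2-x1)*(y3-y1) - (y2-y1)*(x3-x1)))*(y3-y1) = y4 by rw [div_mul_eq_mul_div, div_mul_eq_mul_div, add_assoc, ← add_div, add_div' _ _ _ h123, div_eq_iff h123]; ring]
    exact hR4
  refine ⟨u, v, fun x y => ?_⟩
  have h := hzero x y
  unfold ev2 at h ⊢
  linear_combination h

lemma key_sum {K A B C D : ℂ} (hK : K ≠ 0) (hA : A ≠ 0) (hB : B ≠ 0) (hC : C ≠ 0)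
    (hD : D ≠ 0) (hrel : D = C - B + A) :
    1/(K*A*B*C) + 1/(-(K*A*B*D)) + 1/(K*A*C*D) + 1/(-(K*B*C*D)) = 0 := by
  obtain ⟨N, hNd⟩ : ∃ N : ℂ, K*A*B*C*D = N := ⟨_, rfl⟩
  have hN : N ≠ 0 := by
    rw [← hNd]
    exact mul_ne_zero (mul_ne_zero (mul_ne_zero (mul_ne_zero hK hA) hB) hC) hD
  have r1 : 1/(K*A*B*C) = D / N := by
    rw [div_eq_div_iff (by rw [← hNd] at hN; intro h; exact hN (by rw [h, zero_mul])) hN, ← hNd]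
    ring
  have r2 : 1/(-(K*A*B*D)) = -C / N := by
    rw [div_eq_div_iff ?h1 hN, ← hNd]
    · ring
    · intro h
      rw [← hNd] at hN
      apply hN
      have : K*A*B*D = 0 := by linear_combination -h
      linear_combination C * this
  have r3 : 1/(K*A*C*D) = B / N := by
    rw [div_eq_div_iff ?h2 hN, ← hNd]
    · ring
    · intro h
      rw [← hNd] at hN
      exact hN (by linear_combination B * h)
  have r4 : 1/(-(K*B*C*D)) = -A / N := by
    rw [div_eq_div_iff ?h3 hN, ← hNd]
    · ring
    · intro h
      rw [← hNd] at hN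
      apply hN
      have : K*B*C*D = 0 := by linear_combination -h
      linear_combination A * this
  rw [r1, r2, r3, r4, ← add_div, ← add_div, ← add_div]
  rw [show D + -C + B + -A = 0 by rw [hrel]; ring, zero_div]

open MvPolynomial in
lemma conic_rep (R : MvPolynomial (Fin 2) ℂ) (h : R.totalDegree ≤ 2) :
    ∃ a b c d e f : ℂ, R = C a + C b * X 0 + C c * X 1 + C d * X 0 ^ 2
      + C e * (X 0 * X 1) + C f * X 1 ^ 2 := by
  refine ⟨coeff 0 R, coeff (Finsupp.single 0 1) R, coeff (Finsupp.single 1 1) R,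
    coeff (Finsupp.single 0 2) R,
    coeff (Finsupp.single 0 1 + Finsupp.single 1 1) R, coeff (Finsupp.single 1 2) R, ?_⟩
  have hx : (X 0 * X 1 : MvPolynomial (Fin 2) ℂ)
      = monomial (Finsupp.single 0 1 + Finsupp.single 1 1) 1 := by
    rw [X, X, monomial_mul, one_mul]
  ext m
  have hsum : (∑ i ∈ m.support, m i) = m 0 + m 1 := by
    rw [show (∑ i ∈ m.support, m i) = m.sum (fun _ n => n) from rfl, Finsupp.sum_fintype]
    · simp [Fin.sum_univ_two]
    · simp
  simp only [coeff_add, coeff_C_mul, hx, coeff_monomial, coeff_X', coeff_X_pow, coeff_C,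
    mul_ite, mul_one, mul_zero]
  by_cases hm : m 0 + m 1 ≤ 2
  · have b0 : m 0 ≤ 2 := by omega
    have b1 : m 1 ≤ 2 := by omega
    have hrw : ∀ (a b : ℕ), m 0 = a → m 1 = b →
        m = Finsupp.single 0 a + Finsupp.single 1 b := by
      intro a b h0 h1
      ext i; fin_cases i <;> simp [Finsupp.single_apply, h0, h1]
    interval_cases h0 : m 0 <;> interval_cases h1 : m 1 <;>
      first
      | (exfalso; omega)
      | (rw [show m = _ from hrw _ _ rfl rfl];
         norm_num [Finsupp.ext_iff, Fin.forall_fin_two, Finsupp.single_apply])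
  · have hz : coeff m R = 0 := by
      apply coeff_eq_zero_of_totalDegree_lt
      rw [hsum]; omega
    have hne : ∀ c : Fin 2 →₀ ℕ, c 0 + c 1 ≤ 2 → ¬ (c = m) := by
      intro c hc hcm; rw [hcm] at hc; omega
    rw [hz, if_neg (hne _ (by simp)), if_neg (hne _ (by simp)), if_neg (hne _ (by simp)),
      if_neg (hne _ (by simp)), if_neg (hne _ (by simp [Finsupp.single_apply])),
      if_neg (hne _ (by simp))]
    ring


set_option maxHeartbeats 3200000 in
/-- First Euler–Jacobi relation on spectra: the sum of reciprocals of the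
Jacobian determinants at the four nondegenerate singular points of a
quadratic vector field vanishes. -/
theorem euler_jacobi_relation_one
    (P Q : MvPolynomial (Fin 2) ℂ)
    (hP : P.totalDegree = 2) (hQ : Q.totalDegree = 2)
    (detDv : (Fin 2 → ℂ) → ℂ)
    (hdet : ∀ x, detDv x =
      eval x (pderiv 0 P) * eval x (pderiv 1 Q) -
      eval x (pderiv 1 P) * eval x (pderiv 0 Q))
    (p : Fin 4 → (Fin 2 → ℂ))
    (hinj : Function.Injective p)
    (hzeros : ∀ x : Fin 2 → ℂ, (eval x P = 0 ∧ eval x Q = 0) ↔ ∃ k, x = p k)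
    (hnd : ∀ k, detDv (p k) ≠ 0) :
    ∑ k, 1 / detDv (p k) = 0 := by
  -- scalar coefficient representations of P and Q
  obtain ⟨aP, bP, cP, dP, eP, fP, hPrep⟩ := conic_rep P (le_of_eq hP)
  obtain ⟨aQ, bQ, cQ, dQ, eQ, fQ, hQrep⟩ := conic_rep Q (le_of_eq hQ)
  have heP : ∀ x : Fin 2 → ℂ, eval x P = ev2 aP bP cP dP eP fP (x 0) (x 1) := by
    intro x; rw [hPrep]; simp [ev2]; ring
  have heQ : ∀ x : Fin 2 → ℂ, eval x Q = ev2 aQ bQ cQ dQ eQ fQ (x 0) (x 1) := by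
    intro x; rw [hQrep]; simp [ev2]; ring
  have hdP0 : ∀ x : Fin 2 → ℂ, eval x (pderiv 0 P) = bP + 2*dP*(x 0) + eP*(x 1) := by
    intro x; rw [hPrep]; simp [pderiv_X_self, pderiv_X_of_ne]; ring
  have hdP1 : ∀ x : Fin 2 → ℂ, eval x (pderiv 1 P) = cP + eP*(x 0) + 2*fP*(x 1) := by
    intro x; rw [hPrep]; simp [pderiv_X_self, pderiv_X_of_ne]; ring
  have hdQ0 : ∀ x : Fin 2 → ℂ, eval x (pderiv 0 Q) = bQ + 2*dQ*(x 0) + eQ*(x 1) := by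
    intro x; rw [hQrep]; simp [pderiv_X_self, pderiv_X_of_ne]; ring
  have hdQ1 : ∀ x : Fin 2 → ℂ, eval x (pderiv 1 Q) = cQ + eQ*(x 0) + 2*fQ*(x 1) := by
    intro x; rw [hQrep]; simp [pderiv_X_self, pderiv_X_of_ne]; ring
  have hz' : ∀ x : Fin 2 → ℂ,
      (ev2 aP bP cP dP eP fP (x 0) (x 1) = 0 ∧ ev2 aQ bQ cQ dQ eQ fQ (x 0) (x 1) = 0)
        ↔ ∃ m, x = p m := by
    intro x; rw [← heP x, ← heQ x]; exact hzeros x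
  -- general position
  have hΔ123 := noncollinear hinj hz' (i := 0) (j := 1) (k := 2)
    (by decide) (by decide) (by decide)
  have hΔ124 := noncollinear hinj hz' (i := 0) (j := 1) (k := 3)
    (by decide) (by decide) (by decide)
  have hΔ134 := noncollinear hinj hz' (i := 0) (j := 2) (k := 3)
    (by decide) (by decide) (by decide)
  have hΔ234 := noncollinear hinj hz' (i := 1) (j := 2) (k := 3)
    (by decide) (by decide) (by decide)
  -- the four points are zeros
  have hzP : ∀ k : Fin 4, ev2 aP bP cP dP eP fP (p k 0) (p k 1) = 0 :=
    fun k => ((hz' (p k)).2 ⟨k, rfl⟩).1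
  have hzQ : ∀ k : Fin 4, ev2 aQ bQ cQ dQ eQ fQ (p k 0) (p k 1) = 0 :=
    fun k => ((hz' (p k)).2 ⟨k, rfl⟩).2
  -- P and Q lie in the pencil spanned by S = L12*L34 and T = L13*L24
  obtain ⟨u, v, hPst⟩ := rep hΔ123 hΔ124 hΔ134 (hzP 0) (hzP 1) (hzP 2) (hzP 3)
  obtain ⟨u', v', hQst⟩ := rep hΔ123 hΔ124 hΔ134 (hzQ 0) (hzQ 1) (hzQ 2) (hzQ 3)
  obtain ⟨hPa, hPb, hPc2, hPd, hPe, hPf⟩ := ev2_inj (a' := u*((-((p 1 0)-(p 0 0))*(p 0 1) + ((p 1 1)-(p 0 1))*(p 0 0))*(-((p 3 0)-(p 2 0))*(p 2 1) + ((p 3 1)-(p 2 1))*(p 2 0))) + v*((-((p 2 0)-(p 0 0))*(p 0 1) + ((p 2 1)-(p 0 1))*(p 0 0))*(-((p 3 0)-(p 1 0))*(p 1 1) + ((p 3 1)-(p 1 1))*(p 1 0))))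
    (fun x y => by rw [hPst x y]; unfold ev2; ring :
      ∀ x y : ℂ, ev2 aP bP cP dP eP fP x y = ev2 (u*((-((p 1 0)-(p 0 0))*(p 0 1) + ((p 1 1)-(p 0 1))*(p 0 0))*(-((p 3 0)-(p 2 0))*(p 2 1) + ((p 3 1)-(p 2 1))*(p 2 0))) + v*((-((p 2 0)-(p 0 0))*(p 0 1) + ((p 2 1)-(p 0 1))*(p 0 0))*(-((p 3 0)-(p 1 0))*(p 1 1) + ((p 3 1)-(p 1 1))*(p 1 0)))) (u*((-((p 1 0)-(p 0 0))*(p 0 1) + ((p 1 1)-(p 0 1))*(p 0 0))*(-((p 3 1)-(p 2 1)))+(-((p 3 0)-(p 2 0))*(p 2 1) + ((p 3 1)-(p 2 1))*(p 2 0))*(-((p 1 1)-(p 0 1)))) + v*((-((p 2 0)-(p 0 0))*(p 0 1) + ((p 2 1)-(p 0 1))*(p 0 0))*(-((p 3 1)-(p 1 1)))+(-((p 3 0)-(p 1 0))*(p 1 1) + ((p 3 1)-(p 1 1))*(p 1 0))*(-((p 2 1)-(p 0 1))))) (u*((-((p 1 0)-(p 0 0))*(p 0 1) + ((p 1 1)-(p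 0 1))*(p 0 0))*((p 3 0)-(p 2 0))+(-((p 3 0)-(p 2 0))*(p 2 1) + ((p 3 1)-(p 2 1))*(p 2 0))*((p 1 0)-(p 0 0))) + v*((-((p 2 0)-(p 0 0))*(p 0 1) + ((p 2 1)-(p 0 1))*(p 0 0))*((p 3 0)-(p 1 0))+(-((p 3 0)-(p 1 0))*(p 1 1) + ((p 3 1)-(p 1 1))*(p 1 0))*((p 2 0)-(p 0 0)))) (u*((-((p 1 1)-(p 0 1)))*(-((p 3 1)-(p 2 1)))) + v*((-((p 2 1)-(p 0 1)))*(-((p 3 1)-(p 1 1))))) (u*((-((p 1 1)-(p 0 1)))*((p 3 0)-(p 2 0))+(-((p 3 1)-(p 2 1)))*((p 1 0)-(p 0 0))) + v*((-((p 2 1)-(p 0 1)))*((p 3 0)-(p 1 0))+(-((p 3 1)-(p 1 1)))*((p 2 0)-(p 0 0)))) (u*(((p 1 0)-(p 0 0))*((p 3 0)-(p 2 0))) + v*(((p 2 0)-(p 0 0))*((p 3 0)-(p 1 0)))) x y)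
  obtain ⟨hQa, hQb, hQc2, hQd, hQe, hQf⟩ := ev2_inj (a' := u'*((-((p 1 0)-(p 0 0))*(p 0 1) + ((p 1 1)-(p 0 1))*(p 0 0))*(-((p 3 0)-(p 2 0))*(p 2 1) + ((p 3 1)-(p 2 1))*(p 2 0))) + v'*((-((p 2 0)-(p 0 0))*(p 0 1) + ((p 2 1)-(p 0 1))*(p 0 0))*(-((p 3 0)-(p 1 0))*(p 1 1) + ((p 3 1)-(p 1 1))*(p 1 0))))
    (fun x y => by rw [hQst x y]; unfold ev2; ring :
      ∀ x y : ℂ, ev2 aQ bQ cQ dQ eQ fQ x y = ev2 (u'*((-((p 1 0)-(p 0 0))*(p 0 1) + ((p 1 1)-(p 0 1))*(p 0 0))*(-((p 3 0)-(p 2 0))*(p 2 1) + ((p 3 1)-(p 2 1))*(p 2 0))) + v'*((-((p 2 0)-(p 0 0))*(p 0 1) + ((p 2 1)-(p 0 1))*(p 0 0))*(-((p 3 0)-(p 1 0))*(p 1 1) + ((p 3 1)-(p 1 1))*(p 1 0)))) (u'*((-((p 1 0)-(p 0 0))*(p 0 1) + ((p 1 1)-(p 0 1))*(p 0 0))*(-((p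 3 1)-(p 2 1)))+(-((p 3 0)-(p 2 0))*(p 2 1) + ((p 3 1)-(p 2 1))*(p 2 0))*(-((p 1 1)-(p 0 1)))) + v'*((-((p 2 0)-(p 0 0))*(p 0 1) + ((p 2 1)-(p 0 1))*(p 0 0))*(-((p 3 1)-(p 1 1)))+(-((p 3 0)-(p 1 0))*(p 1 1) + ((p 3 1)-(p 1 1))*(p 1 0))*(-((p 2 1)-(p 0 1))))) (u'*((-((p 1 0)-(p 0 0))*(p 0 1) + ((p 1 1)-(p 0 1))*(p 0 0))*((p 3 0)-(p 2 0))+(-((p 3 0)-(p 2 0))*(p 2 1) + ((p 3 1)-(p 2 1))*(p 2 0))*((p 1 0)-(p 0 0))) + v'*((-((p 2 0)-(p 0 0))*(p 0 1) + ((p 2 1)-(p 0 1))*(p 0 0))*((p 3 0)-(p 1 0))+(-((p 3 0)-(p 1 0))*(p 1 1) + ((p 3 1)-(p 1 1))*(p 1 0))*((p 2 0)-(p 0 0)))) (u'*((-((p 1 1)-(p 0 1)))*(-((p 3 1)-(p 2 1)))) + v'*((-((p 2 1)-(p 0 1)))*(-((p 3 1)-(p 1 1))))) (u'*((-((p 1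 1)-(p 0 1)))*((p 3 0)-(p 2 0))+(-((p 3 1)-(p 2 1)))*((p 1 0)-(p 0 0))) + v'*((-((p 2 1)-(p 0 1)))*((p 3 0)-(p 1 0))+(-((p 3 1)-(p 1 1)))*((p 2 0)-(p 0 0)))) (u'*(((p 1 0)-(p 0 0))*((p 3 0)-(p 2 0))) + v'*(((p 2 0)-(p 0 0))*((p 3 0)-(p 1 0)))) x y)
  -- factor the Jacobian determinants
  have hJ1 : detDv (p 0) = ((u*v' - v*u') * (((p 1 0)-(p 0 0))*((p 2 1)-(p 0 1)) - ((p 1 1)-(p 0 1))*((p 2 0)-(p 0 0))) * (((p 1 0)-(p 0 0))*((p 3 1)-(p 0 1)) - ((p 1 1)-(p 0 1))*((p 3 0)-(p 0 0))) * (((p 2 0)-(p 0 0))*((p 3 1)-(p 0 1)) - ((p 2 1)-(p 0 1))*((p 3 0)-(p 0 0)))) := by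
    rw [hdet (p 0), hdP0 (p 0), hdP1 (p 0), hdQ0 (p 0), hdQ1 (p 0),
      hPb, hPc2, hPd, hPe, hPf, hQb, hQc2, hQd, hQe, hQf]
    ring
  have hJ2 : detDv (p 1) = -((u*v' - v*u') * (((p 1 0)-(p 0 0))*((p 2 1)-(p 0 1)) - ((p 1 1)-(p 0 1))*((p 2 0)-(p 0 0))) * (((p 1 0)-(p 0 0))*((p 3 1)-(p 0 1)) - ((p 1 1)-(p 0 1))*((p 3 0)-(p 0 0))) * (((p 2 0)-(p 1 0))*((p 3 1)-(p 1 1)) - ((p 2 1)-(p 1 1))*((p 3 0)-(p 1 0)))) := by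
    rw [hdet (p 1), hdP0 (p 1), hdP1 (p 1), hdQ0 (p 1), hdQ1 (p 1),
      hPb, hPc2, hPd, hPe, hPf, hQb, hQc2, hQd, hQe, hQf]
    ring
  have hJ3 : detDv (p 2) = ((u*v' - v*u') * (((p 1 0)-(p 0 0))*((p 2 1)-(p 0 1)) - ((p 1 1)-(p 0 1))*((p 2 0)-(p 0 0))) * (((p 2 0)-(p 0 0))*((p 3 1)-(p 0 1)) - ((p 2 1)-(p 0 1))*((p 3 0)-(p 0 0))) * (((p 2 0)-(p 1 0))*((p 3 1)-(p 1 1)) - ((p 2 1)-(p 1 1))*((p 3 0)-(p 1 0)))) := by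
    rw [hdet (p 2), hdP0 (p 2), hdP1 (p 2), hdQ0 (p 2), hdQ1 (p 2),
      hPb, hPc2, hPd, hPe, hPf, hQb, hQc2, hQd, hQe, hQf]
    ring
  have hJ4 : detDv (p 3) = -((u*v' - v*u') * (((p 1 0)-(p 0 0))*((p 3 1)-(p 0 1)) - ((p 1 1)-(p 0 1))*((p 3 0)-(p 0 0))) * (((p 2 0)-(p 0 0))*((p 3 1)-(p 0 1)) - ((p 2 1)-(p 0 1))*((p 3 0)-(p 0 0))) * (((p 2 0)-(p 1 0))*((p 3 1)-(p 1 1)) - ((p 2 1)-(p 1 1))*((p 3 0)-(p 1 0)))) := by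
    rw [hdet (p 3), hdP0 (p 3), hdP1 (p 3), hdQ0 (p 3), hdQ1 (p 3),
      hPb, hPc2, hPd, hPe, hPf, hQb, hQc2, hQd, hQe, hQf]
    ring
  -- nondegeneracy of the pencil
  have hD : u*v' - v*u' ≠ 0 := by
    intro h0
    apply hnd 0
    rw [hJ1, h0, zero_mul, zero_mul, zero_mul]
  -- final computation
  rw [Fin.sum_univ_four, hJ1, hJ2, hJ3, hJ4]
  exact key_sum hD hΔ123 hΔ124 hΔ134 hΔ234 (by ring)
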